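/- The special value α₀ satisfies (2 − 2cos(πα₀)) · (1 − t(α₀)) = 1. Consequently, for every indefinite-unitary matrix U = [[a, conj(b)], [b, conj(a)]] with |a|² − |b|² = 1 and |b|² = −t(α₀), the first Reichardt iterate U₁ := U·D(πα₀)·U^{−1}·D(πα₀)·U·D(πα₀)^{−2} is a diagonal matrix; that is, at α = α₀ a single Reichardt iteration exactly eliminates all leakage from the two-qubit computational state |00⟩ into the negative-norm non-computational state |NC₁⟩. -/

import Mathlib

open Complex Matrix

/-- The special neglecton parameter `α₀ = 2 − (2/π)·arcsin((1−√17)/8) ≈ 2.2553`. -/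
noncomputable def alpha0 : ℝ :=
  2 - (2 / Real.pi) * Real.arcsin ((1 - Real.sqrt 17) / 8)

/-- The coupling coefficient `t(α) = (cot(π(1+α)/4) − 1)/(cot(π(2+α)/4) − 1)`. -/
noncomputable def tcoef (α : ℝ) : ℝ :=
  (Real.cot (Real.pi * (1 + α) / 4) - 1) / (Real.cot (Real.pi * (2 + α) / 4) - 1)

/-- The z-rotation `D(θ) = diag(e^{iθ/2}, e^{-iθ/2})`. -/
noncomputable def Dmat (θ : ℝ) : Matrix (Fin 2) (Fin 2) ℂ :=
  !![Complex.exp (Complex.I * θ / 2), 0; 0, Complex.exp (-(Complex.I * θ / 2))]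

/-- The Reichardt iteration `U₀ = U`, `U_{k+1} = U_k D(θ) U_k⁻¹ D(θ) U_k D(θ)⁻²`. -/
noncomputable def reichardt (θ : ℝ) (U : Matrix (Fin 2) (Fin 2) ℂ) :
    ℕ → Matrix (Fin 2) (Fin 2) ℂ
  | 0 => U
  | k + 1 =>
      reichardt θ U k * Dmat θ * (reichardt θ U k)⁻¹ * Dmat θ * reichardt θ U k *
        (Dmat θ ^ 2)⁻¹

/- ### Auxiliary lemmas -/

/-- The special value `s = (1 − √17)/8`. -/
noncomputable def sval : ℝ := (1 - Real.sqrt 17) / 8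

lemma sq17 : Real.sqrt 17 ^ 2 = 17 := Real.sq_sqrt (by norm_num)
lemma s17lt : Real.sqrt 17 < 5 := by nlinarith [Real.sqrt_nonneg 17, sq17]
lemma s17gt : 4 < Real.sqrt 17 := by nlinarith [Real.sqrt_nonneg 17, sq17]

lemma cos_alpha0 : Real.cos (Real.pi * alpha0) = 1 - 2 * sval ^ 2 := by
  have hπ : Real.pi ≠ 0 := Real.pi_ne_zero
  have h : Real.pi * alpha0 = 2 * Real.pi - 2 * Real.arcsin sval := by
    unfold alpha0 sval; field_simp
  have hsin : Real.sin (Real.arcsin sval) = sval :=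
    Real.sin_arcsin (by unfold sval; nlinarith [s17lt]) (by unfold sval; nlinarith [s17gt])
  have hpyth := Real.sin_sq_add_cos_sq (Real.arcsin sval)
  rw [h, Real.cos_two_pi_sub, Real.cos_two_mul]
  rw [hsin] at hpyth
  nlinarith [hpyth]

lemma tcoef_alpha0 : tcoef alpha0 = sval / (1 + sval) := by
  have hπ : Real.pi ≠ 0 := Real.pi_ne_zero
  set φ := Real.arcsin sval with hφ
  set S := Real.sin (φ/2) with hSdef
  set C := Real.cos (φ/2) with hCdef
  have hsin : Real.sin φ = sval :=
    Real.sin_arcsin (by unfold sval; nlinarith [s17lt]) (by unfold sval; nlinarith [s17gt])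
  have h2SC : 2 * S * C = sval := by
    have := Real.sin_two_mul (φ/2)
    rw [show 2*(φ/2) = φ by ring, hsin] at this
    linarith
  have hpyth : S^2 + C^2 = 1 := Real.sin_sq_add_cos_sq (φ/2)
  have hSne : S ≠ 0 := by
    intro h0; rw [h0] at h2SC; unfold sval at h2SC; nlinarith [s17gt]
  have hCSne : C + S ≠ 0 := by
    intro h0
    have hC : C = -S := by linarith
    rw [hC] at h2SC hpyth
    unfold sval at h2SC
    nlinarith [s17lt]
  have hx1 : Real.pi * (1 + alpha0) / 4 = Real.pi - (Real.pi/4 + φ/2) := by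
    unfold alpha0
    rw [show (1 - Real.sqrt 17)/8 = sval from rfl, ← hφ]
    field_simp; ring
  have hx2 : Real.pi * (2 + alpha0) / 4 = Real.pi - φ/2 := by
    unfold alpha0
    rw [show (1 - Real.sqrt 17)/8 = sval from rfl, ← hφ]
    field_simp; ring
  have hd1 : Real.sqrt 2/2*C + Real.sqrt 2/2*S ≠ 0 := by
    intro h0
    have h2 : Real.sqrt 2 / 2 * (C + S) = 0 := by linear_combination h0
    rcases mul_eq_zero.mp h2 with h | h
    · exact absurd h (by positivity)
    · exact hCSne h
  unfold tcoef
  rw [hx1, hx2, Real.cot_eq_cos_div_sin, Real.cot_eq_cos_div_sin,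
    Real.cos_pi_sub, Real.sin_pi_sub, Real.cos_pi_sub, Real.sin_pi_sub,
    Real.cos_add, Real.sin_add, Real.cos_pi_div_four, Real.sin_pi_div_four,
    ← hSdef, ← hCdef]
  have e1 : -(Real.sqrt 2/2*C - Real.sqrt 2/2*S)/(Real.sqrt 2/2*C + Real.sqrt 2/2*S) - 1
      = (-2*C)/(C+S) := by
    rw [div_sub_one hd1, div_eq_div_iff hd1 hCSne]; ring_nf
  have e2 : (-C)/S - 1 = (-(C+S))/S := by
    rw [div_sub_one hSne]; ring_nf
  rw [e1, e2, ← h2SC]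
  have hCS2 : (C+S)^2 ≠ 0 := pow_ne_zero 2 hCSne
  have h1ne : 1 + 2*S*C ≠ 0 := by
    intro h0; apply hCS2; linear_combination h0 + hpyth
  rw [div_div_div_eq]
  rw [div_eq_div_iff (mul_ne_zero hCSne (neg_ne_zero.mpr hCSne)) h1ne]
  linear_combination (2*S*C) * hpyth

lemma part1' : (2 - 2 * Real.cos (Real.pi * alpha0)) * (1 - tcoef alpha0) = 1 := by
  rw [cos_alpha0, tcoef_alpha0]
  have h1s : 1 + sval ≠ 0 := by unfold sval; intro h; nlinarith [s17lt]
  have h4s : 4 * sval ^ 2 = 1 + sval := by unfold sval; nlinarith [sq17]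
  field_simp
  nlinarith [h4s]

/- ### Main theorem -/

/-- At the special value `α₀`, `(2 − 2cos(πα₀))(1 − t(α₀)) = 1`, and consequently one
Reichardt iteration with `θ = πα₀` exactly eliminates all leakage: for every
indefinite-unitary `U = [[a, conj b],[b, conj a]]` with `|a|² − |b|² = 1` and
`|b|² = −t(α₀)`, the first iterate `U₁` is diagonal. -/
theorem alpha0_eliminates_leakage :
    (2 - 2 * Real.cos (Real.pi * alpha0)) * (1 - tcoef alpha0) = 1 ∧
    ∀ a b : ℂ, ‖a‖ ^ 2 - ‖b‖ ^ 2 = 1 →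
      ‖b‖ ^ 2 = -(tcoef alpha0) →
      (reichardt (Real.pi * alpha0)
          !![a, starRingEnd ℂ b; b, starRingEnd ℂ a] 1).IsDiag := by
  refine ⟨part1', ?_⟩
  intro a b hab hb
  set θ := Real.pi * alpha0 with hθ
  -- the key real identity
  have hc : Real.cos θ = Real.cos (Real.pi * alpha0) := rfl
  have hq : (1 + ‖b‖ ^ 2) * (2 * Real.cos θ - 1) = ‖b‖ ^ 2 := by
    rw [hb]
    have := part1'
    rw [← hθ] at this
    nlinarith [this]
  -- complex versions of the hypotheses
  have hA : a * starRingEnd ℂ a = ((‖a‖ ^ 2 : ℝ) : ℂ) := by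
    rw [Complex.mul_conj, Complex.sq_norm]
  have hB : b * starRingEnd ℂ b = ((‖b‖ ^ 2 : ℝ) : ℂ) := by
    rw [Complex.mul_conj, Complex.sq_norm]
  have h1 : a * starRingEnd ℂ a - b * starRingEnd ℂ b = 1 := by
    rw [hA, hB, ← Complex.ofReal_sub, hab, Complex.ofReal_one]
  have hkey : (a * starRingEnd ℂ a) *
      (Complex.exp (Complex.I * θ) + (Complex.exp (Complex.I * θ))⁻¹ - 1)
      = b * starRingEnd ℂ b := by
    have hexp : Complex.exp (Complex.I * θ) + (Complex.exp (Complex.I * θ))⁻¹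
        = 2 * ((Real.cos θ : ℝ) : ℂ) := by
      rw [← Complex.exp_neg, Complex.ofReal_cos]
      rw [show Complex.I * (θ:ℂ) = (θ:ℂ) * Complex.I by ring]
      rw [show -((θ:ℂ) * Complex.I) = -(θ:ℂ) * Complex.I by ring]
      exact (Complex.two_cos _).symm
    rw [hexp, hA, hB]
    have haq : (‖a‖ ^ 2 : ℝ) = 1 + ‖b‖ ^ 2 := by linarith [hab]
    rw [haq]
    exact_mod_cast congrArg (fun x : ℝ => (x : ℂ)) (by linarith [hq] : (1 + ‖b‖ ^ 2) * (2 * Real.cos θ - 1) = ‖b‖ ^ 2)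
  -- matrix computation
  set E := Complex.exp (Complex.I * θ / 2) with hEdef
  have hEne : E ≠ 0 := Complex.exp_ne_zero _
  have hE2 : Complex.exp (Complex.I * θ) = E ^ 2 := by
    rw [hEdef, sq, ← Complex.exp_add]; congr 1; ring
  have hD : Dmat θ = !![E, 0; 0, E⁻¹] := by
    rw [Dmat, Complex.exp_neg, hEdef]
  have hUinv : (!![a, starRingEnd ℂ b; b, starRingEnd ℂ a])⁻¹
      = !![starRingEnd ℂ a, -(starRingEnd ℂ b); -b, a] := by
    apply Matrix.inv_eq_right_inv
    rw [Matrix.mul_fin_two, Matrix.one_fin_two]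
    ext i j
    fin_cases i <;> fin_cases j <;> simp <;>
      first | ring1 | linear_combination h1
  have hW : (Dmat θ ^ 2)⁻¹ = !![(E^2)⁻¹, 0; 0, E^2] := by
    apply Matrix.inv_eq_right_inv
    rw [pow_two, hD, Matrix.mul_fin_two, Matrix.mul_fin_two, Matrix.one_fin_two]
    ext i j
    fin_cases i <;> fin_cases j <;> simp <;> field_simp <;> ring
  have hEE : E^2 * (E^2)⁻¹ = 1 := mul_inv_cancel₀ (pow_ne_zero 2 hEne)
  have hkey2 : a * starRingEnd ℂ a * (E^2*E^2 + 1 - E^2) = b * starRingEnd ℂ b * E^2 := by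
    rw [hE2] at hkey
    linear_combination E^2 * hkey - a * starRingEnd ℂ a * hEE
  show (!![a, starRingEnd ℂ b; b, starRingEnd ℂ a] * Dmat θ *
      (!![a, starRingEnd ℂ b; b, starRingEnd ℂ a])⁻¹ * Dmat θ *
      !![a, starRingEnd ℂ b; b, starRingEnd ℂ a] * (Dmat θ ^ 2)⁻¹).IsDiag
  rw [hUinv, hW, hD]
  rw [Matrix.mul_fin_two, Matrix.mul_fin_two, Matrix.mul_fin_two, Matrix.mul_fin_two,
    Matrix.mul_fin_two]
  clear hA hB hb hab hq hkey hc h1 hE2 hD hUinv hW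
  intro i j hij
  fin_cases i <;> fin_cases j <;> simp_all
  all_goals field_simp
  · rw [← mul_assoc] at hkey2
    linear_combination (starRingEnd ℂ b) * hkey2
  · rw [← mul_assoc] at hkey2
    linear_combination b * hkey2
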